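/- Suppose A + λB ≻ 0 for all λ in an open interval J and there is no w with Aw = a and Bw = b. Then φ(λ) = g(x(λ)), with x(λ) = -(A + λB)⁻¹(a + λb) and g(x) = xᵀBx + 2bᵀx + β, is strictly decreasing on J. -/

import Mathlib

open Matrix

/-- Strict minimality of the quadratic `y ↦ yᵀMy + 2vᵀy` at `x` when `Mx = -v`, `M` PD. -/
lemma key_min {n : ℕ} (M : Matrix (Fin n) (Fin n) ℝ) (hM : M.PosDef) (hMs : Mᵀ = M)
    (v xx y : Fin n → ℝ) (hx : M.mulVec xx = -v) (hne : y ≠ xx) :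
    xx ⬝ᵥ M.mulVec xx + 2 * (v ⬝ᵥ xx) < y ⬝ᵥ M.mulVec y + 2 * (v ⬝ᵥ y) := by
  have hpos := hM.dotProduct_mulVec_pos (sub_ne_zero.mpr hne)
  simp only [star_trivial] at hpos
  have hsym : ∀ u w : Fin n → ℝ, u ⬝ᵥ M.mulVec w = w ⬝ᵥ M.mulVec u := by
    intro u w
    rw [Matrix.dotProduct_mulVec, ← Matrix.mulVec_transpose, hMs, dotProduct_comm]
  have hexp : (y - xx) ⬝ᵥ M.mulVec (y - xx)
      = y ⬝ᵥ M.mulVec y + 2 * (v ⬝ᵥ y) - (xx ⬝ᵥ M.mulVec xx + 2 * (v ⬝ᵥ xx)) := by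
    have h1 : xx ⬝ᵥ M.mulVec xx = -(v ⬝ᵥ xx) := by
      rw [hsym]; rw [hx]; simp [dotProduct_comm]
    have h2 : y ⬝ᵥ M.mulVec xx = -(v ⬝ᵥ y) := by
      rw [hx]; simp [dotProduct_comm]
    have h3 : xx ⬝ᵥ M.mulVec y = -(v ⬝ᵥ y) := by rw [hsym]; exact h2
    rw [Matrix.mulVec_sub, sub_dotProduct, dotProduct_sub,
      dotProduct_sub, h1, h2, h3]
    ring
  rw [hexp] at hpos
  linarith

theorem stmt13 {n : ℕ} (A B : Matrix (Fin n) (Fin n) ℝ) (a b : Fin n → ℝ) (β : ℝ)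
    (hA : A.IsSymm) (hB : B.IsSymm)
    (c d : ℝ) (hPD : ∀ t ∈ Set.Ioo c d, (A + t • B).PosDef)
    (hnow : ¬ ∃ w : Fin n → ℝ, A.mulVec w = a ∧ B.mulVec w = b)
    (x : ℝ → Fin n → ℝ)
    (hx : ∀ t, x t = -(A + t • B)⁻¹.mulVec (a + t • b))
    (φ : ℝ → ℝ)
    (hφ : ∀ t, φ t = x t ⬝ᵥ B.mulVec (x t) + 2 * (b ⬝ᵥ x t) + β) :
    StrictAntiOn φ (Set.Ioo c d) := by
  intro t1 ht1 t2 ht2 hlt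
  have hPD1 := hPD t1 ht1
  have hPD2 := hPD t2 ht2
  have hsymM : ∀ t : ℝ, (A + t • B)ᵀ = A + t • B := by
    intro t
    rw [Matrix.transpose_add, Matrix.transpose_smul, hA.eq, hB.eq]
  -- M_t x(t) = -(a + t b)
  have hMx : ∀ t ∈ Set.Ioo c d, (A + t • B).mulVec (x t) = -(a + t • b) := by
    intro t ht
    have hdet : IsUnit (A + t • B).det := (hPD t ht).det_pos.ne'.isUnit
    rw [hx t, Matrix.mulVec_neg, Matrix.mulVec_mulVec, Matrix.mul_nonsing_inv _ hdet,
      Matrix.one_mulVec]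
  have hM1 := hMx t1 ht1
  have hM2 := hMx t2 ht2
  -- x t1 ≠ x t2
  have hne : x t2 ≠ x t1 := by
    intro heq
    apply hnow
    refine ⟨-(x t1), ?_, ?_⟩
    · have h1 := hM1
      have h2 := hM2
      rw [heq] at h2
      have hB' : B.mulVec (x t1) = -b := by
        have hsub : ((t1 - t2) • B).mulVec (x t1) = (t1 - t2) • (-b) := by
          have : (A + t1 • B) - (A + t2 • B) = (t1 - t2) • B := by
            rw [sub_smul]; abel
          rw [← this, Matrix.sub_mulVec, h1, h2]
          funext i; simp [Pi.smul_apply, sub_smul]; ring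
        have ht12 : t1 - t2 ≠ 0 := by linarith
        have := hsub
        rw [Matrix.smul_mulVec] at this
        exact smul_right_injective _ ht12 this
      have hA' : A.mulVec (x t1) = -a := by
        have : A.mulVec (x t1) + t1 • B.mulVec (x t1) = -(a + t1 • b) := by
          rw [← Matrix.smul_mulVec, ← Matrix.add_mulVec]; exact h1
        rw [hB'] at this
        funext i
        have := congrFun this i
        simp at this ⊢
        linarith
      rw [Matrix.mulVec_neg, hA']; simp
    · have h2 := hM2
      rw [heq] at h2
      have hB' : B.mulVec (x t1) = -b := by
        have hsub : ((t1 - t2) • B).mulVec (x t1) = (t1 - t2) • (-b) := by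
          have : (A + t1 • B) - (A + t2 • B) = (t1 - t2) • B := by
            rw [sub_smul]; abel
          rw [← this, Matrix.sub_mulVec, hM1, h2]
          funext i; simp [Pi.smul_apply, sub_smul]; ring
        have ht12 : t1 - t2 ≠ 0 := by linarith
        rw [Matrix.smul_mulVec] at hsub
        exact smul_right_injective _ ht12 hsub
      rw [Matrix.mulVec_neg, hB']; simp
  have hne' : x t1 ≠ x t2 := fun h => hne h.symm
  -- two strict minimality inequalities
  have h1 := key_min (A + t1 • B) hPD1 (hsymM t1) (a + t1 • b) (x t1) (x t2) hM1 hne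
  have h2 := key_min (A + t2 • B) hPD2 (hsymM t2) (a + t2 • b) (x t2) (x t1) hM2 hne'
  -- expand quadratics
  have expand : ∀ (t : ℝ) (y : Fin n → ℝ),
      y ⬝ᵥ (A + t • B).mulVec y + 2 * ((a + t • b) ⬝ᵥ y)
        = (y ⬝ᵥ A.mulVec y + 2 * (a ⬝ᵥ y)) + t * (y ⬝ᵥ B.mulVec y + 2 * (b ⬝ᵥ y)) := by
    intro t y
    rw [Matrix.add_mulVec, Matrix.smul_mulVec, dotProduct_add,
      add_dotProduct, dotProduct_smul, smul_dotProduct]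
    simp only [smul_eq_mul]
    ring
  rw [expand t1 (x t1), expand t1 (x t2)] at h1
  rw [expand t2 (x t2), expand t2 (x t1)] at h2
  rw [hφ t1, hφ t2]
  nlinarith [h1, h2, hlt]
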